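/- If (α, β) is a Bailey pair relative to a, then so is (α', β') with α'_L = a^L q^{L²} α_L and β'_L = Σ_{r=0}^L a^r q^{r²} β_r / (q;q)_{L-r}. -/

import Mathlib

/-- Finite q-shifted factorial `(x;q)_n`. -/
noncomputable def qp (q x : ℂ) (n : ℕ) : ℂ := ∏ k ∈ Finset.range n, (1 - x * q ^ k)

lemma qp_zero (q x : ℂ) : qp q x 0 = 1 := by simp [qp]

lemma qp_succ (q x : ℂ) (n : ℕ) : qp q x (n + 1) = (1 - x) * qp q (x * q) n := by
  rw [qp, Finset.prod_range_succ', qp]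
  rw [mul_comm]
  congr 1
  · simp
  · apply Finset.prod_congr rfl
    intro k _
    rw [pow_succ]
    ring

lemma qp_succ_top (q x : ℂ) (n : ℕ) : qp q x (n + 1) = qp q x n * (1 - x * q ^ n) := by
  rw [qp, Finset.prod_range_succ, qp]

lemma qp_add (q x : ℂ) (m n : ℕ) : qp q x (m + n) = qp q x m * qp q (x * q ^ m) n := by
  rw [qp, Finset.prod_range_add, qp, qp]
  congr 1
  apply Finset.prod_congr rfl
  intro k _
  rw [pow_add]
  ring


noncomputable def gb (q : ℂ) : ℕ → ℕ → ℂ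
  | 0, 0 => 1
  | 0, _ + 1 => 0
  | _ + 1, 0 => 1
  | n + 1, k + 1 => q ^ (k + 1) * gb q n (k + 1) + gb q n k

lemma gb_zero (q : ℂ) (n : ℕ) : gb q n 0 = 1 := by cases n <;> rfl

lemma gb_of_lt (q : ℂ) : ∀ n k : ℕ, n < k → gb q n k = 0 := by
  intro n
  induction n with
  | zero => intro k hk; match k, hk with | k + 1, _ => rfl
  | succ n ih =>
    intro k hk
    match k, hk with
    | k + 1, hk =>
      show q ^ (k + 1) * gb q n (k + 1) + gb q n k = 0
      rw [ih (k+1) (by omega), ih k (by omega)]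
      ring

lemma gb_diag (q : ℂ) (n : ℕ) : gb q n n = 1 := by
  induction n with
  | zero => rfl
  | succ n ih =>
    show q ^ (n + 1) * gb q n (n + 1) + gb q n n = 1
    rw [gb_of_lt q n (n+1) (by omega), ih]; ring

lemma qq_ne (q : ℂ) (hq1 : ‖q‖ < 1) (n : ℕ) : qp q q n ≠ 0 := by
  rw [qp, Finset.prod_ne_zero_iff]
  intro k _
  have h1 : ‖q * q ^ k‖ < 1 := by
    rw [norm_mul, norm_pow]
    have := pow_le_one₀ (norm_nonneg q) (le_of_lt hq1) (n := k)
    nlinarith [norm_nonneg q]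
  intro h
  have : q * q ^ k = 1 := by linear_combination -h
  rw [this] at h1
  simp at h1

lemma ha_ne (q a : ℂ) (haq : ∀ n, qp q (a * q) n ≠ 0) (m : ℕ) :
    (1 : ℂ) - a * q ^ (m + 1) ≠ 0 := by
  have := haq (m + 1)
  rw [qp, Finset.prod_ne_zero_iff] at this
  have h := this m (Finset.self_mem_range_succ m)
  convert h using 2
  rw [pow_succ]
  ring

lemma haqn_ne (q a : ℂ) (haq : ∀ n, qp q (a * q) n ≠ 0) (s n : ℕ) :
    qp q (a * q ^ (s + 1)) n ≠ 0 := by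
  rw [qp, Finset.prod_ne_zero_iff]
  intro k _
  have h := ha_ne q a haq (s + k)
  convert h using 2
  rw [pow_add]
  ring

lemma gb_mul (q : ℂ) : ∀ n k : ℕ, k ≤ n →
    gb q n k * (qp q q k * qp q q (n - k)) = qp q q n := by
  intro n
  induction n with
  | zero =>
    intro k hk
    interval_cases k
    simp [gb_zero, qp_zero]
  | succ n ih =>
    intro k hk
    match k with
    | 0 => simp [gb_zero, qp_zero]
    | k + 1 =>
      have hk' : k ≤ n := by omega
      show (q ^ (k + 1) * gb q n (k + 1) + gb q n k) *
        (qp q q (k + 1) * qp q q (n + 1 - (k + 1))) = qp q q (n + 1)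
      have hnk : n + 1 - (k + 1) = n - k := by omega
      rw [hnk]
      rcases eq_or_lt_of_le hk' with h | h
      · subst h
        rw [gb_of_lt q k (k + 1) (by omega), gb_diag, Nat.sub_self, qp_zero]
        ring
      · have h1 := ih (k + 1) (by omega)
        have h2 := ih k hk'
        set m := n - (k + 1) with hm
        have hs : n - k = m + 1 := by omega
        have hq1 : qp q q (k + 1) = qp q q k * (1 - q * q ^ k) := qp_succ_top q q k
        have hq2 : qp q q (n - k) = qp q q m * (1 - q * q ^ m) := by
          rw [hs]; exact qp_succ_top q q m
        have hq3 : qp q q (n + 1) = qp q q n * (1 - q * q ^ n) := qp_succ_top q q n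
        have hn1 : (k + 1) + (m + 1) = n + 1 := by omega
        have hpow : q ^ (k + 1) * (q * q ^ m) = q * q ^ n := by
          rw [← pow_succ', ← pow_succ' q n, ← pow_add, hn1]
        rw [hq2] at h2 ⊢
        rw [hq1] at h1 ⊢
        rw [hq3]
        linear_combination q ^ (k + 1) * (1 - q * q ^ m) * h1 +
          (1 - q * q ^ k) * h2 - qp q q n * hpow

lemma gbF (q : ℂ) : ∀ n : ℕ, ∀ b : ℂ,
    ∑ k ∈ Finset.range (n + 1), gb q n k * q ^ (k ^ 2) * b ^ k * qp q (b * q ^ (k + 1)) (n - k)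
      = 1 := by
  intro n
  induction n with
  | zero =>
    intro b
    simp [gb_zero, qp_zero]
  | succ n ih =>
    intro b
    -- IH specialized at b*q, with terms normalized
    have hZ := ih (b * q)
    have hz' : ∀ k ∈ Finset.range (n + 1),
        gb q n k * q ^ (k ^ 2) * (b * q) ^ k * qp q (b * q * q ^ (k + 1)) (n - k)
        = gb q n k * q ^ (k ^ 2) * q ^ k * b ^ k * qp q (b * q ^ (k + 1) * q) (n - k) := by
      intro k _
      have h : b * q * q ^ (k + 1) = b * q ^ (k + 1) * q := by ring
      rw [h]; ring
    rw [Finset.sum_congr rfl hz'] at hZ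
    -- peel the k = 0 term of the goal sum
    rw [Finset.sum_range_succ']
    -- split each remaining term via Pascal
    have hterm : ∀ i ∈ Finset.range (n + 1),
        gb q (n + 1) (i + 1) * q ^ ((i + 1) ^ 2) * b ^ (i + 1) *
          qp q (b * q ^ (i + 1 + 1)) (n + 1 - (i + 1))
        = (q ^ (i + 1) * gb q n (i + 1) * q ^ ((i + 1) ^ 2) * b ^ (i + 1) *
            qp q (b * q ^ (i + 1) * q) (n - i))
          + (gb q n i * q ^ (i ^ 2) * q ^ i * b ^ i * (b * q ^ (i + 1)) *
            qp q (b * q ^ (i + 1) * q) (n - i)) := by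
      intro i _
      have h1 : gb q (n + 1) (i + 1) = q ^ (i + 1) * gb q n (i + 1) + gb q n i := rfl
      have h2 : n + 1 - (i + 1) = n - i := by omega
      have h3 : b * q ^ (i + 1 + 1) = b * q ^ (i + 1) * q := by rw [pow_succ]; ring
      rw [h1, h2, h3]
      ring
    rw [Finset.sum_congr rfl hterm, Finset.sum_add_distrib]
    -- now assemble
    set Xs := ∑ i ∈ Finset.range (n + 1),
        q ^ (i + 1) * gb q n (i + 1) * q ^ ((i + 1) ^ 2) * b ^ (i + 1) *
          qp q (b * q ^ (i + 1) * q) (n - i) with hXs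
    set Ws := ∑ i ∈ Finset.range (n + 1),
        gb q n i * q ^ (i ^ 2) * q ^ i * b ^ i * (b * q ^ (i + 1)) *
          qp q (b * q ^ (i + 1) * q) (n - i) with hWs
    -- the A-sum
    have hAsplit : ∑ k ∈ Finset.range (n + 1),
        q ^ k * gb q n k * q ^ (k ^ 2) * b ^ k * qp q (b * q ^ (k + 1)) (n + 1 - k)
        = ∑ i ∈ Finset.range n,
            q ^ (i + 1) * gb q n (i + 1) * q ^ ((i + 1) ^ 2) * b ^ (i + 1) *
              qp q (b * q ^ (i + 1 + 1)) (n + 1 - (i + 1))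
          + q ^ 0 * gb q n 0 * q ^ (0 ^ 2) * b ^ 0 * qp q (b * q ^ (0 + 1)) (n + 1 - 0) :=
      Finset.sum_range_succ' _ n
    have hXdrop : Xs = ∑ i ∈ Finset.range n,
        q ^ (i + 1) * gb q n (i + 1) * q ^ ((i + 1) ^ 2) * b ^ (i + 1) *
          qp q (b * q ^ (i + 1) * q) (n - i) := by
      rw [hXs, Finset.sum_range_succ, gb_of_lt q n (n + 1) (by omega)]
      ring
    have hAX : ∀ i ∈ Finset.range n,
        q ^ (i + 1) * gb q n (i + 1) * q ^ ((i + 1) ^ 2) * b ^ (i + 1) *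
          qp q (b * q ^ (i + 1 + 1)) (n + 1 - (i + 1))
        = q ^ (i + 1) * gb q n (i + 1) * q ^ ((i + 1) ^ 2) * b ^ (i + 1) *
          qp q (b * q ^ (i + 1) * q) (n - i) := by
      intro i _
      have h2 : n + 1 - (i + 1) = n - i := by omega
      have h3 : b * q ^ (i + 1 + 1) = b * q ^ (i + 1) * q := by rw [pow_succ]; ring
      rw [h2, h3]
    have hAZW : ∀ k ∈ Finset.range (n + 1),
        q ^ k * gb q n k * q ^ (k ^ 2) * b ^ k * qp q (b * q ^ (k + 1)) (n + 1 - k)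
        = gb q n k * q ^ (k ^ 2) * q ^ k * b ^ k * qp q (b * q ^ (k + 1) * q) (n - k)
          - gb q n k * q ^ (k ^ 2) * q ^ k * b ^ k * (b * q ^ (k + 1)) *
              qp q (b * q ^ (k + 1) * q) (n - k) := by
      intro k hk
      have hk' : k ≤ n := by simpa [Nat.lt_succ_iff] using hk
      have h2 : n + 1 - k = (n - k) + 1 := by omega
      rw [h2, qp_succ]
      ring
    have hAsum : ∑ k ∈ Finset.range (n + 1),
        q ^ k * gb q n k * q ^ (k ^ 2) * b ^ k * qp q (b * q ^ (k + 1)) (n + 1 - k)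
        = 1 - Ws := by
      rw [Finset.sum_congr rfl hAZW, Finset.sum_sub_distrib, hZ, hWs]
    have hA0 : q ^ 0 * gb q n 0 * q ^ (0 ^ 2) * b ^ 0 * qp q (b * q ^ (0 + 1)) (n + 1 - 0)
        = gb q (n + 1) 0 * q ^ (0 ^ 2) * b ^ 0 * qp q (b * q ^ (0 + 1)) (n + 1 - 0) := by
      rw [gb_zero, gb_zero]; ring
    rw [Finset.sum_congr rfl hAX, hA0] at hAsplit
    rw [hXdrop]
    linear_combination hAsum - hAsplit

lemma key (q a : ℂ) (hq1 : ‖q‖ < 1) (haq : ∀ n, qp q (a * q) n ≠ 0) (j n : ℕ) :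
    ∑ k ∈ Finset.range (n + 1),
        a ^ (j + k) * q ^ ((j + k) ^ 2) /
          (qp q q (n - k) * qp q q k * qp q (a * q) (2 * j + k))
      = a ^ j * q ^ (j ^ 2) / (qp q q n * qp q (a * q) (2 * j + n)) := by
  have hterm : ∀ k ∈ Finset.range (n + 1),
      a ^ (j + k) * q ^ ((j + k) ^ 2) /
        (qp q q (n - k) * qp q q k * qp q (a * q) (2 * j + k))
      = gb q n k * q ^ (k ^ 2) * (a * q ^ (2 * j)) ^ k *
          qp q (a * q ^ (2 * j) * q ^ (k + 1)) (n - k) *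
          (a ^ j * q ^ (j ^ 2)) / (qp q q n * qp q (a * q) (2 * j + n)) := by
    intro k hk
    have hk' : k ≤ n := by simpa [Nat.lt_succ_iff] using hk
    have E1 : qp q (a * q) (2 * j + k) = qp q (a * q) (2 * j) * qp q (a * q * q ^ (2 * j)) k :=
      qp_add q (a * q) (2 * j) k
    have E2 : qp q (a * q) (2 * j + n) = qp q (a * q) (2 * j) * qp q (a * q * q ^ (2 * j)) n :=
      qp_add q (a * q) (2 * j) n
    have hkn : k + (n - k) = n := by omega
    have E3 : qp q (a * q * q ^ (2 * j)) n
        = qp q (a * q * q ^ (2 * j)) k * qp q (a * q * q ^ (2 * j) * q ^ k) (n - k) := by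
      conv_lhs => rw [← hkn]
      exact qp_add q (a * q * q ^ (2 * j)) k (n - k)
    have E4 : a * q ^ (2 * j) * q ^ (k + 1) = a * q * q ^ (2 * j) * q ^ k := by
      rw [pow_succ]; ring
    have E5 := gb_mul q n k hk'
    -- nonzeroness
    have hC : qp q (a * q) (2 * j) ≠ 0 := haq _
    have hPk : qp q (a * q * q ^ (2 * j)) k ≠ 0 := by
      have := haqn_ne q a haq (2 * j) k
      convert this using 2
      rw [pow_succ]; ring
    have hR : qp q (a * q * q ^ (2 * j) * q ^ k) (n - k) ≠ 0 := by
      have := haqn_ne q a haq (2 * j + k) (n - k)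
      convert this using 2
      rw [pow_add, pow_succ]; ring
    have h1 : qp q q (n - k) ≠ 0 := qq_ne q hq1 _
    have h2 : qp q q k ≠ 0 := qq_ne q hq1 _
    have h3 : qp q q n ≠ 0 := qq_ne q hq1 _
    have hD1 : qp q q (n - k) * qp q q k * (qp q (a * q) (2 * j) *
        qp q (a * q * q ^ (2 * j)) k) ≠ 0 :=
      mul_ne_zero (mul_ne_zero h1 h2) (mul_ne_zero hC hPk)
    have hD2 : qp q q n * (qp q (a * q) (2 * j) * (qp q (a * q * q ^ (2 * j)) k *
        qp q (a * q * q ^ (2 * j) * q ^ k) (n - k))) ≠ 0 :=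
      mul_ne_zero h3 (mul_ne_zero hC (mul_ne_zero hPk hR))
    rw [E1, E2, E3, E4, div_eq_div_iff hD1 hD2]
    linear_combination (-(a ^ (j + k) * q ^ ((j + k) ^ 2)) * qp q (a * q) (2 * j) *
      qp q (a * q * q ^ (2 * j)) k * qp q (a * q * q ^ (2 * j) * q ^ k) (n - k)) * E5
  rw [Finset.sum_congr rfl hterm]
  have := gbF q n (a * q ^ (2 * j))
  calc ∑ k ∈ Finset.range (n + 1),
        gb q n k * q ^ (k ^ 2) * (a * q ^ (2 * j)) ^ k *
          qp q (a * q ^ (2 * j) * q ^ (k + 1)) (n - k) *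
          (a ^ j * q ^ (j ^ 2)) / (qp q q n * qp q (a * q) (2 * j + n))
      = (∑ k ∈ Finset.range (n + 1),
          gb q n k * q ^ (k ^ 2) * (a * q ^ (2 * j)) ^ k *
            qp q (a * q ^ (2 * j) * q ^ (k + 1)) (n - k)) *
          (a ^ j * q ^ (j ^ 2)) / (qp q q n * qp q (a * q) (2 * j + n)) := by
        rw [Finset.sum_mul, Finset.sum_div]
    _ = a ^ j * q ^ (j ^ 2) / (qp q q n * qp q (a * q) (2 * j + n)) := by
        rw [this, one_mul]

/-- the special (ρ₁, ρ₂ → ∞) case of the Bailey chain. -/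
theorem bailey_chain_special (q a : ℂ) (hq0 : 0 < ‖q‖) (hq1 : ‖q‖ < 1)
    (haq : ∀ n, qp q (a * q) n ≠ 0) (α β : ℕ → ℂ)
    (hBP : ∀ L, β L = ∑ r ∈ Finset.range (L + 1),
      α r / (qp q q (L - r) * qp q (a * q) (L + r))) :
    ∀ L, (∑ r ∈ Finset.range (L + 1), a ^ r * q ^ (r ^ 2) * β r / qp q q (L - r)) =
      ∑ r ∈ Finset.range (L + 1),
        (a ^ r * q ^ (r ^ 2) * α r) / (qp q q (L - r) * qp q (a * q) (L + r)) := by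
  intro L
  have step1 : ∀ r ∈ Finset.range (L + 1),
      a ^ r * q ^ (r ^ 2) * β r / qp q q (L - r)
      = ∑ j ∈ Finset.range (r + 1),
          α j * (a ^ (j + (r - j)) * q ^ ((j + (r - j)) ^ 2) /
            (qp q q (L - r) * qp q q (r - j) * qp q (a * q) (2 * j + (r - j)))) := by
    intro r hr
    rw [hBP r, Finset.mul_sum, Finset.sum_div]
    apply Finset.sum_congr rfl
    intro j hj
    have hjr : j ≤ r := by simpa [Nat.lt_succ_iff] using hj
    have e1 : j + (r - j) = r := by omega
    have e2 : 2 * j + (r - j) = r + j := by omega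
    rw [e1, e2]
    ring
  rw [Finset.sum_congr rfl step1]
  have swap := Finset.sum_Ico_Ico_comm 0 (L + 1) (fun j r =>
    α j * (a ^ (j + (r - j)) * q ^ ((j + (r - j)) ^ 2) /
      (qp q q (L - r) * qp q q (r - j) * qp q (a * q) (2 * j + (r - j)))))
  simp only [← Finset.range_eq_Ico] at swap
  have swap2 : ∑ r ∈ Finset.range (L + 1), ∑ j ∈ Finset.range (r + 1),
      α j * (a ^ (j + (r - j)) * q ^ ((j + (r - j)) ^ 2) /
        (qp q q (L - r) * qp q q (r - j) * qp q (a * q) (2 * j + (r - j))))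
      = ∑ j ∈ Finset.range (L + 1), ∑ r ∈ Finset.Ico j (L + 1),
          α j * (a ^ (j + (r - j)) * q ^ ((j + (r - j)) ^ 2) /
            (qp q q (L - r) * qp q q (r - j) * qp q (a * q) (2 * j + (r - j)))) := by
    rw [← swap]
  rw [swap2]
  apply Finset.sum_congr rfl
  intro j hj
  have hjL : j ≤ L := by simpa [Nat.lt_succ_iff] using hj
  rw [Finset.sum_Ico_eq_sum_range]
  have hLj : L + 1 - j = (L - j) + 1 := by omega
  rw [hLj]
  have hterm : ∀ k ∈ Finset.range ((L - j) + 1),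
      α j * (a ^ (j + (j + k - j)) * q ^ ((j + (j + k - j)) ^ 2) /
        (qp q q (L - (j + k)) * qp q q (j + k - j) * qp q (a * q) (2 * j + (j + k - j))))
      = α j * (a ^ (j + k) * q ^ ((j + k) ^ 2) /
        (qp q q ((L - j) - k) * qp q q k * qp q (a * q) (2 * j + k))) := by
    intro k hk
    have hkLj : k ≤ L - j := by simpa [Nat.lt_succ_iff] using hk
    have e1 : j + k - j = k := by omega
    have e2 : L - (j + k) = (L - j) - k := by omega
    rw [e1, e2]
  rw [Finset.sum_congr rfl hterm, ← Finset.mul_sum, key q a hq1 haq j (L - j)]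
  have e3 : 2 * j + (L - j) = L + j := by omega
  rw [e3]
  ring
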